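/- The number of partitions of n in which no part appears more than d times equals the number of partitions of n into parts not divisible by d+1. -/

import Mathlib

open PowerSeries Finset

open scoped Classical

noncomputable section GlaisherAux

variable {α : Type*}

/-- A convenience constructor for the power series whose coefficients indicate a subset. -/
def indicatorSeries (α : Type*) [Semiring α] (s : Set ℕ) : PowerSeries α :=
  PowerSeries.mk fun n => if n ∈ s then 1 else 0

theorem coeff_indicator (s : Set ℕ) [Semiring α] (n : ℕ) :
    coeff (R := α) n (indicatorSeries _ s) = if n ∈ s then 1 else 0 :=
  coeff_mk _ _

theorem constantCoeff_indicator (s : Set ℕ) [Semiring α] :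
    constantCoeff (R := α) (indicatorSeries _ s) = if 0 ∈ s then 1 else 0 :=
  rfl

-- The main workhorse (copied from Archive.Wiedijk100Theorems.Partition, `partialGF_prop`).
theorem glaisherGF_prop (α : Type*) [CommSemiring α] (n : ℕ) (s : Finset ℕ)
    (hs : ∀ i ∈ s, 0 < i) (c : ℕ → Set ℕ) (hc : ∀ i, i ∉ s → 0 ∈ c i) :
    #{p : n.Partition | (∀ j, p.parts.count j ∈ c j) ∧ ∀ j ∈ p.parts, j ∈ s} =
      coeff (R := α) n (∏ i ∈ s, indicatorSeries α ((· * i) '' c i)) := by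
  simp_rw [coeff_prod, coeff_indicator, prod_boole, sum_boole]
  apply congr_arg
  simp only [mem_univ, forall_true_left, not_and, not_forall, exists_prop,
    Set.mem_image, not_exists]
  set φ : (a : Nat.Partition n) →
    a ∈ filter (fun p ↦ (∀ (j : ℕ), Multiset.count j p.parts ∈ c j) ∧ ∀ j ∈ p.parts, j ∈ s) univ →
    ℕ →₀ ℕ := fun p _ => {
      toFun := fun i => Multiset.count i p.parts • i
      support := Finset.filter (fun i => i ≠ 0) p.parts.toFinset
      mem_support_toFun := fun a => by
        simp only [smul_eq_mul, ne_eq, mul_eq_zero, Multiset.count_eq_zero]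
        rw [not_or, not_not]
        simp only [Multiset.mem_toFinset, not_not, mem_filter] }
  refine Finset.card_bij φ ?_ ?_ ?_
  · intro a ha
    simp only [φ, not_forall, not_exists, not_and, exists_prop, mem_filter]
    rw [mem_finsuppAntidiag]
    dsimp only [ne_eq, smul_eq_mul, id_eq, eq_mpr_eq_cast, le_eq_subset, Finsupp.coe_mk]
    simp only [mem_univ, forall_true_left, not_and, not_forall, exists_prop,
      mem_filter, true_and] at ha
    refine ⟨⟨?_, fun i ↦ ?_⟩, fun i _ ↦ ⟨a.parts.count i, ha.1 i, rfl⟩⟩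
    · conv_rhs => simp [← a.parts_sum]
      rw [sum_multiset_count_of_subset _ s]
      · simp only [smul_eq_mul]
      · intro i
        simp only [Multiset.mem_toFinset, not_not, mem_filter]
        apply ha.2
    · simp only [ne_eq, Multiset.mem_toFinset, not_not, mem_filter, and_imp]
      exact fun hi _ ↦ ha.2 i hi
  · skip
    intro p₁ hp₁ p₂ hp₂ h
    apply Nat.Partition.ext
    simp only [true_and, mem_univ, mem_filter] at hp₁ hp₂
    ext i
    simp only [φ, ne_eq, Multiset.mem_toFinset, not_not, smul_eq_mul, Finsupp.mk.injEq] at h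
    by_cases hi : i = 0
    · rw [hi]
      rw [Multiset.count_eq_zero_of_notMem]
      · rw [Multiset.count_eq_zero_of_notMem]
        intro a; exact Nat.lt_irrefl 0 (hs 0 (hp₂.2 0 a))
      intro a; exact Nat.lt_irrefl 0 (hs 0 (hp₁.2 0 a))
    · rw [← mul_left_inj' hi]
      rw [funext_iff] at h
      exact h.2 i
  · simp only [φ, mem_filter, mem_finsuppAntidiag, mem_univ, exists_prop, true_and, and_assoc]
    rintro f ⟨hf, hf₃, hf₄⟩
    have hf' : f ∈ finsuppAntidiag s n := mem_finsuppAntidiag.mpr ⟨hf, hf₃⟩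
    simp only [mem_finsuppAntidiag] at hf'
    refine ⟨⟨∑ i ∈ s, Multiset.replicate (f i / i) i, ?_, ?_⟩, ?_, ?_, ?_⟩
    · intro i hi
      simp only [exists_prop, Multiset.mem_sum, mem_map, Function.Embedding.coeFn_mk] at hi
      rcases hi with ⟨t, ht, z⟩
      apply hs
      rwa [Multiset.eq_of_mem_replicate z]
    · simp_rw [Multiset.sum_sum, Multiset.sum_replicate, Nat.nsmul_eq_mul]
      rw [← hf'.1]
      refine sum_congr rfl fun i hi => Nat.div_mul_cancel ?_
      rcases hf₄ i hi with ⟨w, _, hw₂⟩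
      rw [← hw₂]
      exact dvd_mul_left _ _
    · intro i
      simp_rw [Multiset.count_sum', Multiset.count_replicate, sum_ite_eq']
      split_ifs with h
      · rcases hf₄ i h with ⟨w, hw₁, hw₂⟩
        rwa [← hw₂, Nat.mul_div_cancel _ (hs i h)]
      · exact hc _ h
    · intro i hi
      rw [Multiset.mem_sum] at hi
      rcases hi with ⟨j, hj₁, hj₂⟩
      rwa [Multiset.eq_of_mem_replicate hj₂]
    · ext i
      simp_rw [Multiset.count_sum', Multiset.count_replicate, sum_ite_eq']
      simp only [ne_eq, Multiset.mem_toFinset, not_not, smul_eq_mul, ite_mul,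
        zero_mul, Finsupp.coe_mk]
      split_ifs with h
      · apply Nat.div_mul_cancel
        rcases hf₄ i h with ⟨w, _, hw₂⟩
        apply Dvd.intro_left _ hw₂
      · apply symm
        rw [← Finsupp.notMem_support_iff]
        exact notMem_mono hf'.2 h

theorem num_series'' [Field α] {i : ℕ} (hi : 0 < i) :
    (1 - (X : PowerSeries α) ^ i)⁻¹ = indicatorSeries α {k | i ∣ k} := by
  obtain ⟨j, rfl⟩ := Nat.exists_eq_add_of_lt hi
  rw [zero_add]
  rw [PowerSeries.inv_eq_iff_mul_eq_one]
  · ext n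
    cases n with
    | zero => simp [mul_sub, zero_pow, constantCoeff_indicator]
    | succ n =>
      simp only [coeff_one, if_false, mul_sub, mul_one, coeff_indicator,
        LinearMap.map_sub, reduceCtorEq]
      simp_rw [coeff_mul, coeff_X_pow, coeff_indicator, @boole_mul _ _ _ _]
      erw [@sum_ite _ _ _ _ _ (fun _ => Classical.propDecidable _), sum_ite]
      simp_rw [@filter_filter _ _ _ _ _, sum_const_zero, add_zero, sum_const, nsmul_eq_mul, mul_one,
        sub_eq_iff_eq_add, zero_add]
      symm
      split_ifs with h
      · suffices #{a ∈ antidiagonal (n + 1) | j + 1 ∣ a.fst ∧ a.snd = j + 1} = 1 by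
          simp only [Set.mem_setOf_eq]; convert congr_arg ((↑) : ℕ → α) this; norm_cast
        rw [card_eq_one]
        cases' h with p hp
        refine ⟨((j + 1) * (p - 1), j + 1), ?_⟩
        ext ⟨a₁, a₂⟩
        simp only [mem_filter, Prod.mk_inj, Finset.HasAntidiagonal.mem_antidiagonal, mem_singleton]
        constructor
        · rintro ⟨a_left, ⟨a, rfl⟩, rfl⟩
          refine ⟨?_, rfl⟩
          rw [Nat.mul_sub_left_distrib, ← hp, ← a_left, mul_one, Nat.add_sub_cancel]
        · rintro ⟨rfl, rfl⟩
          match p with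
          | 0 => rw [mul_zero] at hp; cases hp
          | p + 1 => rw [hp]; simp [mul_add]
      · suffices #{a ∈ antidiagonal (n + 1) | j + 1 ∣ a.fst ∧ a.snd = j + 1} = 0 by
          simp only [Set.mem_setOf_eq]; convert congr_arg ((↑) : ℕ → α) this; norm_cast
        rw [card_eq_zero]
        apply eq_empty_of_forall_notMem
        simp only [Prod.forall, mem_filter, not_and, Finset.HasAntidiagonal.mem_antidiagonal]
        rintro _ h₁ h₂ ⟨a, rfl⟩ rfl
        apply h
        simp [← h₂]
  · simp [zero_pow]

theorem bounded_series [Field α] (d : ℕ) {i : ℕ} (hi : 0 < i) :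
    indicatorSeries α ((· * i) '' Set.Iic d) = ∑ k ∈ range (d + 1), (X : PowerSeries α) ^ (k * i) := by
  ext n
  simp_rw [map_sum, coeff_X_pow, coeff_indicator]
  split_ifs with h
  · obtain ⟨k, hk, rfl⟩ := h
    rw [Finset.sum_eq_single k]
    · simp
    · intro j _ hj
      rw [if_neg]
      exact fun hc => hj (Nat.eq_of_mul_eq_mul_right hi hc.symm)
    · intro hk'
      exact absurd (mem_range.2 (Nat.lt_succ_of_le hk)) hk'
  · symm
    apply Finset.sum_eq_zero
    intro k hk
    rw [if_neg]
    rintro rfl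
    exact h ⟨k, Nat.lt_succ_iff.1 (mem_range.1 hk), rfl⟩

theorem geom_series_mul [Field α] (d i : ℕ) :
    (∑ k ∈ range (d + 1), (X : PowerSeries α) ^ (k * i)) * (1 - X ^ i) =
      1 - X ^ ((d + 1) * i) := by
  have h2 : (∑ k ∈ range (d + 1), (X : PowerSeries α) ^ (k * i)) =
      ∑ k ∈ range (d + 1), ((X : PowerSeries α) ^ i) ^ k := by
    simp_rw [← pow_mul, mul_comm]
  rw [h2, mul_comm (d + 1) i, pow_mul]
  linear_combination (-1 : PowerSeries α) * geom_sum_mul ((X : PowerSeries α) ^ i) (d + 1)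

end GlaisherAux

set_option maxHeartbeats 1600000 in
theorem glaisher (d : ℕ) (hd : 0 < d) (n : ℕ) :
    Nat.card {p : Nat.Partition n // ∀ i, p.parts.count i ≤ d} =
      Nat.card {p : Nat.Partition n // ∀ i ∈ p.parts, ¬ (d + 1) ∣ i} := by
  classical
  set M := n + 1 with hM
  set m := (d + 1) * M with hm
  -- generating functions over ℚ
  set A : PowerSeries ℚ := ∏ i ∈ Ioc 0 m, ∑ k ∈ range (d + 1), (X : PowerSeries ℚ) ^ (k * i)
    with hA
  set B : PowerSeries ℚ :=
    ∏ i ∈ (Ioc 0 m).filter (fun i => ¬ (d + 1) ∣ i), (1 - (X : PowerSeries ℚ) ^ i)⁻¹ with hB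
  set C : PowerSeries ℚ := ∏ i ∈ Ioc M m, (1 - (X : PowerSeries ℚ) ^ ((d + 1) * i)) with hC
  set P : PowerSeries ℚ := ∏ i ∈ Ioc 0 m, (1 - (X : PowerSeries ℚ) ^ i) with hP
  have hPc : PowerSeries.constantCoeff (R := ℚ) P = 1 := by
    rw [hP, map_prod]
    apply Finset.prod_eq_one
    intro i hi
    have : 0 < i := (mem_Ioc.1 hi).1
    simp [zero_pow this.ne']
  have hPne : P ≠ 0 := fun h => by simp [h] at hPc
  have h1 : A * P = ∏ i ∈ Ioc 0 m, (1 - (X : PowerSeries ℚ) ^ ((d + 1) * i)) := by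
    rw [hA, hP, ← Finset.prod_mul_distrib]
    exact Finset.prod_congr rfl fun i _ => geom_series_mul d i
  have hd1 : 0 < d + 1 := Nat.succ_pos d
  have key : ∏ i ∈ (Ioc 0 m).filter (fun i => (d + 1) ∣ i), (1 - (X : PowerSeries ℚ) ^ i) =
      ∏ j ∈ Ioc 0 M, (1 - (X : PowerSeries ℚ) ^ ((d + 1) * j)) := by
    refine Finset.prod_nbij' (fun a => a / (d + 1)) (fun b => (d + 1) * b) ?_ ?_ ?_ ?_ ?_
    · intro a ha
      rw [mem_filter, mem_Ioc] at ha
      obtain ⟨⟨h0, hm'⟩, c, rfl⟩ := ha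
      simp only [mem_Ioc, Nat.mul_div_cancel_left _ hd1]
      have hc : 0 < c := by
        rcases Nat.eq_zero_or_pos c with rfl | hc
        · simp at h0
        · exact hc
      refine ⟨hc, ?_⟩
      rw [hm] at hm'
      exact Nat.le_of_mul_le_mul_left hm' hd1
    · intro b hb
      rw [mem_Ioc] at hb
      rw [mem_filter, mem_Ioc, hm]
      exact ⟨⟨Nat.mul_pos hd1 hb.1, Nat.mul_le_mul_left _ hb.2⟩, Dvd.intro _ rfl⟩
    · intro a ha
      rw [mem_filter] at ha
      exact Nat.mul_div_cancel' ha.2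
    · intro b _
      exact Nat.mul_div_cancel_left _ hd1
    · intro a ha
      rw [mem_filter] at ha
      rw [Nat.mul_div_cancel' ha.2]
  have h2 : B * P = ∏ j ∈ Ioc 0 M, (1 - (X : PowerSeries ℚ) ^ ((d + 1) * j)) := by
    rw [hP, ← Finset.prod_filter_mul_prod_filter_not (Ioc 0 m) (fun i => ¬ (d + 1) ∣ i),
      hB, ← mul_assoc, ← Finset.prod_mul_distrib]
    have hone : ∀ i ∈ (Ioc 0 m).filter (fun i => ¬ (d + 1) ∣ i),
        (1 - (X : PowerSeries ℚ) ^ i)⁻¹ * (1 - (X : PowerSeries ℚ) ^ i) = 1 := by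
      intro i hi
      have hi0 : 0 < i := (mem_Ioc.1 (mem_filter.1 hi).1).1
      apply PowerSeries.inv_mul_cancel
      simp [zero_pow hi0.ne']
    rw [Finset.prod_congr rfl hone, Finset.prod_const_one, one_mul, ← key]
    apply Finset.prod_congr _ (fun _ _ => rfl)
    apply Finset.filter_congr
    intro i _
    simp [not_not]
  have h3 : A = B * C := by
    have hMm : M ≤ m := Nat.le_mul_of_pos_left _ (Nat.succ_pos d)
    have : A * P = (B * C) * P := by
      rw [h1, mul_right_comm, h2, hC, Finset.prod_Ioc_consecutive _ (Nat.zero_le M) hMm]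
    exact mul_right_cancel₀ hPne this
  -- coefficient extraction
  have hcoeff : PowerSeries.coeff (R := ℚ) n A = PowerSeries.coeff (R := ℚ) n B := by
    rw [h3, hC]
    apply coeff_mul_prod_one_sub_of_lt_order
    intro i hi
    rw [PowerSeries.order_X_pow]
    have : M < i := (mem_Ioc.1 hi).1
    have : n < (d + 1) * i := by nlinarith [Nat.succ_pos d]
    exact_mod_cast this
  -- counting: A side
  have hsA : ∀ i ∈ Ioc 0 m, 0 < i := fun i hi => (mem_Ioc.1 hi).1
  have hpartsmem : ∀ p : Nat.Partition n, ∀ j ∈ p.parts, j ∈ Ioc 0 m := by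
    intro p j hj
    rw [mem_Ioc]
    refine ⟨p.parts_pos hj, ?_⟩
    have hjn : j ≤ n := by
      simpa [p.parts_sum] using Multiset.single_le_sum (fun _ _ => Nat.zero_le _) _ hj
    have : n ≤ m := by rw [hm, hM]; nlinarith
    omega
  have hcountA : (Nat.card {p : Nat.Partition n // ∀ i, p.parts.count i ≤ d} : ℚ) =
      PowerSeries.coeff (R := ℚ) n A := by
    have := glaisherGF_prop ℚ n (Ioc 0 m) hsA (fun _ => Set.Iic d) (fun _ _ => Nat.zero_le d)
    rw [hA]
    rw [Finset.prod_congr rfl (fun i hi => (bounded_series d (hsA i hi)).symm)]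
    rw [← this]
    rw [Nat.card_eq_fintype_card, Fintype.card_subtype]
    norm_cast
    apply Finset.card_nbij id
    · intro p hp
      simp only [mem_coe, mem_filter, mem_univ, true_and] at hp ⊢
      exact ⟨fun j => hp j, hpartsmem p⟩
    · exact fun a _ b _ h => h
    · intro p hp
      simp only [Set.mem_image, mem_coe, mem_filter, mem_univ, true_and] at hp ⊢
      exact ⟨p, hp.1, rfl⟩
  -- counting: B side
  have hcountB : (Nat.card {p : Nat.Partition n // ∀ i ∈ p.parts, ¬ (d + 1) ∣ i} : ℚ) =
      PowerSeries.coeff (R := ℚ) n B := by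
    have hs' : ∀ i ∈ (Ioc 0 m).filter (fun i => ¬ (d + 1) ∣ i), 0 < i :=
      fun i hi => hsA i (mem_filter.1 hi).1
    have := glaisherGF_prop ℚ n ((Ioc 0 m).filter (fun i => ¬ (d + 1) ∣ i)) hs'
      (fun _ => Set.univ) (fun _ _ => trivial)
    rw [hB]
    have hprod : ∀ i ∈ (Ioc 0 m).filter (fun i => ¬ (d + 1) ∣ i),
        (1 - (X : PowerSeries ℚ) ^ i)⁻¹ = indicatorSeries ℚ ((· * i) '' Set.univ) := by
      intro i hi
      have hset : ((· * i) '' Set.univ) = {k | i ∣ k} := by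
        ext k
        constructor
        · rintro ⟨c, -, rfl⟩; exact ⟨c, mul_comm c i⟩
        · rintro ⟨c, rfl⟩; exact ⟨c, trivial, mul_comm c i⟩
      rw [num_series'' (hs' i hi), hset]
    rw [Finset.prod_congr rfl hprod, ← this]
    rw [Nat.card_eq_fintype_card, Fintype.card_subtype]
    norm_cast
    apply Finset.card_nbij id
    · intro p hp
      simp only [mem_coe, mem_filter, mem_univ, true_and] at hp ⊢
      exact ⟨fun j => trivial, fun j hj => ⟨hpartsmem p j hj, hp j hj⟩⟩
    · exact fun a _ b _ h => h
    · intro p hp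
      simp only [Set.mem_image, mem_coe, mem_filter, mem_univ, true_and] at hp ⊢
      exact ⟨p, fun j hj => (hp.2 j hj).2, rfl⟩
  have : (Nat.card {p : Nat.Partition n // ∀ i, p.parts.count i ≤ d} : ℚ) =
      (Nat.card {p : Nat.Partition n // ∀ i ∈ p.parts, ¬ (d + 1) ∣ i} : ℚ) := by
    rw [hcountA, hcountB, hcoeff]
  exact_mod_cast this
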